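/- arXiv:1306.4934 — 2 statements merged into one kernel-verified Lean document; each statement's English description precedes it below -/
import Mathlib

section
/- Let δ(α) be as in the closed form: δ(α) = |1/2 - α| for 0 ≤ α < 2/3, δ(α) = (1-α)/2 for 2/3 ≤ α < 1, δ(α) = 0 for α ≥ 1; and let d(α) be the GDOF piecewise function. Then the ratio δ(α)/d(α) equals (1-2α)/(2(1-α)) for 0 ≤ α < 1/2, equals 1 - 1/(2α) for 1/2 ≤ α < 2/3, equals (1-α)/(2-α) for 2/3 ≤ α < 1, and equals 0 for α ≥ 1. Moreover, 0 ≤ δ(α)/d(α) ≤ 1/2 for all α ≥ 0. -/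
noncomputable def deltaFn (α : ℝ) : ℝ :=
  if α < 2/3 then |1/2 - α| else if α < 1 then (1 - α)/2 else 0

noncomputable def gdof (α : ℝ) : ℝ := min 1 (min (max (α/2) (1 - α/2)) (max α (1-α)))

lemma case1 (α : ℝ) (h0 : 0 ≤ α) (h : α < 1/2) :
    deltaFn α / gdof α = (1 - 2*α)/(2*(1-α)) := by
  have hd : deltaFn α = 1/2 - α := by
    simp only [deltaFn, if_pos (by linarith : α < 2/3)]
    rw [abs_of_nonneg (by linarith)]
  have hg : gdof α = 1 - α := by
    simp only [gdof]
    rw [max_eq_right (by linarith : α/2 ≤ 1 - α/2),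
        max_eq_right (by linarith : α ≤ 1 - α),
        min_eq_right (by linarith : (1:ℝ) - α ≤ 1 - α/2),
        min_eq_right (by linarith : (1:ℝ) - α ≤ 1)]
  rw [hd, hg]
  rw [div_eq_div_iff (by linarith) (by linarith)]
  ring

lemma case2 (α : ℝ) (h0 : 1/2 ≤ α) (h : α < 2/3) :
    deltaFn α / gdof α = 1 - 1/(2*α) := by
  have hd : deltaFn α = α - 1/2 := by
    simp only [deltaFn, if_pos h]
    rw [abs_of_nonpos (by linarith)]; ring
  have hg : gdof α = α := by
    simp only [gdof]
    rw [max_eq_right (by linarith : α/2 ≤ 1 - α/2),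
        max_eq_left (by linarith : 1 - α ≤ α),
        min_eq_right (by linarith : α ≤ 1 - α/2),
        min_eq_right (by linarith : α ≤ 1)]
  rw [hd, hg]
  have hα : α ≠ 0 := by positivity
  field_simp

lemma case3 (α : ℝ) (h0 : 2/3 ≤ α) (h : α < 1) :
    deltaFn α / gdof α = (1-α)/(2-α) := by
  have hd : deltaFn α = (1 - α)/2 := by
    simp only [deltaFn, if_neg (by linarith : ¬ α < 2/3), if_pos h]
  have hg : gdof α = 1 - α/2 := by
    simp only [gdof]
    rw [max_eq_right (by linarith : α/2 ≤ 1 - α/2),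
        max_eq_left (by linarith : 1 - α ≤ α),
        min_eq_left (by linarith : (1:ℝ) - α/2 ≤ α),
        min_eq_right (by linarith : (1:ℝ) - α/2 ≤ 1)]
  rw [hd, hg]
  rw [div_eq_div_iff (by linarith) (by linarith)]
  ring

lemma case4 (α : ℝ) (h : 1 ≤ α) : deltaFn α / gdof α = 0 := by
  have hd : deltaFn α = 0 := by
    simp only [deltaFn, if_neg (by linarith : ¬ α < 2/3), if_neg (by linarith : ¬ α < 1)]
  rw [hd, zero_div]

theorem stmt13 (α : ℝ) (hα : 0 ≤ α) :
    (α < 1/2 → deltaFn α / gdof α = (1 - 2*α)/(2*(1-α))) ∧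
    (1/2 ≤ α → α < 2/3 → deltaFn α / gdof α = 1 - 1/(2*α)) ∧
    (2/3 ≤ α → α < 1 → deltaFn α / gdof α = (1-α)/(2-α)) ∧
    (1 ≤ α → deltaFn α / gdof α = 0) ∧
    (0 ≤ deltaFn α / gdof α ∧ deltaFn α / gdof α ≤ 1/2) := by
  refine ⟨case1 α hα, case2 α, case3 α, case4 α, ?_⟩
  rcases lt_or_ge α (1/2) with h1 | h1
  · rw [case1 α hα h1]
    constructor
    · apply div_nonneg <;> linarith
    · rw [div_le_iff₀ (by linarith)]; linarith
  rcases lt_or_ge α (2/3) with h2 | h2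
  · rw [case2 α h1 h2]
    have hα2 : (0:ℝ) < 2*α := by linarith
    constructor
    · have : 1/(2*α) ≤ 1 := by rw [div_le_one hα2]; linarith
      linarith
    · have : 1/2 ≤ 1/(2*α) := by
        rw [div_le_div_iff₀ (by norm_num) hα2]; linarith
      linarith
  rcases lt_or_ge α 1 with h3 | h3
  · rw [case3 α h2 h3]
    constructor
    · apply div_nonneg <;> linarith
    · rw [div_le_iff₀ (by linarith)]; linarith
  · rw [case4 α h3]; norm_num
end

section
/- For fixed α ∈ [0,1), the limit as P → ∞ of [(1/2)·(min{log₂(1+P) + log₂(1 + P/(1+P^α)), 2·log₂(1 + P^α + P/(1+P^α))} - log₂(1+P+P^α))] / log₂(P) equals min{(1-α)/2, |1/2 - α|}. -/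
open Real Filter

private lemma logb_rpow_mul {P c : ℝ} (hP : 0 < P) : logb 2 (P ^ c) = c * logb 2 P := by
  rw [Real.logb, Real.log_rpow hP, Real.logb]; ring

private lemma key (c k : ℝ) (hk : 1 ≤ k) (f : ℝ → ℝ)
    (h : ∀ᶠ P in atTop, P ^ c / k ≤ f P ∧ f P ≤ k * P ^ c) :
    Tendsto (fun P => logb 2 (f P) / logb 2 P) atTop (nhds c) := by
  have hk0 : (0:ℝ) < k := lt_of_lt_of_le one_pos hk
  have hL : Tendsto (fun P : ℝ => logb 2 P) atTop atTop := Real.tendsto_logb_atTop one_lt_two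
  have hK : Tendsto (fun P : ℝ => logb 2 k / logb 2 P) atTop (nhds 0) :=
    Tendsto.div_atTop tendsto_const_nhds hL
  have hlow : Tendsto (fun P : ℝ => c - logb 2 k / logb 2 P) atTop (nhds c) := by
    simpa using tendsto_const_nhds.sub hK
  have hup : Tendsto (fun P : ℝ => c + logb 2 k / logb 2 P) atTop (nhds c) := by
    simpa using tendsto_const_nhds.add hK
  have hev : ∀ᶠ P in atTop, (0:ℝ) < P ∧ 0 < logb 2 P := by
    filter_upwards [eventually_gt_atTop (1:ℝ)] with P hP
    exact ⟨lt_trans one_pos hP, Real.logb_pos one_lt_two hP⟩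
  refine tendsto_of_tendsto_of_tendsto_of_le_of_le' hlow hup ?_ ?_
  · filter_upwards [h, hev] with P ⟨h1, h2⟩ ⟨hP0, hL0⟩
    have hrp : (0:ℝ) < P ^ c := Real.rpow_pos_of_pos hP0 c
    have hf0 : 0 < f P := lt_of_lt_of_le (by positivity) h1
    have hlog : logb 2 (P ^ c / k) ≤ logb 2 (f P) :=
      (Real.logb_le_logb one_lt_two (by positivity) hf0).mpr h1
    rw [Real.logb_div (ne_of_gt hrp) (ne_of_gt hk0), logb_rpow_mul hP0] at hlog
    rw [le_div_iff₀ hL0]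
    have hc := div_mul_cancel₀ (logb 2 k) (ne_of_gt hL0)
    nlinarith [hc]
  · filter_upwards [h, hev] with P ⟨h1, h2⟩ ⟨hP0, hL0⟩
    have hrp : (0:ℝ) < P ^ c := Real.rpow_pos_of_pos hP0 c
    have hf0 : 0 < f P := lt_of_lt_of_le (by positivity) h1
    have hlog : logb 2 (f P) ≤ logb 2 (k * P ^ c) :=
      (Real.logb_le_logb one_lt_two hf0 (by positivity)).mpr h2
    rw [Real.logb_mul (ne_of_gt hk0) (ne_of_gt hrp), logb_rpow_mul hP0] at hlog
    rw [div_le_iff₀ hL0]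
    have hc := div_mul_cancel₀ (logb 2 k) (ne_of_gt hL0)
    nlinarith [hc]

theorem stmt15 (α : ℝ) (hα : α ∈ Set.Ico (0:ℝ) 1) :
    Tendsto (fun P : ℝ =>
        ((1/2) * (min (logb 2 (1+P) + logb 2 (1 + P/(1 + P ^ α)))
            (2 * logb 2 (1 + P ^ α + P/(1 + P ^ α)))
          - logb 2 (1 + P + P ^ α))) / logb 2 P)
      atTop (nhds (min ((1-α)/2) |1/2 - α|)) := by
  obtain ⟨hα0, hα1⟩ := hα
  set m : ℝ := max α (1 - α) with hm
  have hmα : α ≤ m := le_max_left _ _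
  have hmα' : 1 - α ≤ m := le_max_right _ _
  -- basic facts holding eventually
  have hbase : ∀ᶠ P in atTop, (1:ℝ) ≤ P := eventually_ge_atTop 1
  have hA : Tendsto (fun P : ℝ => logb 2 (1 + P) / logb 2 P) atTop (nhds 1) := by
    apply key 1 2 one_le_two
    filter_upwards [hbase] with P hP
    rw [Real.rpow_one]
    constructor <;> linarith
  have hB : Tendsto (fun P : ℝ => logb 2 (1 + P / (1 + P ^ α)) / logb 2 P) atTop
      (nhds (1 - α)) := by
    apply key (1 - α) 2 one_le_two
    filter_upwards [hbase] with P hP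
    have hP0 : (0:ℝ) < P := lt_of_lt_of_le one_pos hP
    have h1 : (1:ℝ) ≤ P ^ α := Real.one_le_rpow hP hα0
    have h2 : (1:ℝ) ≤ P ^ (1 - α) := Real.one_le_rpow hP (by linarith)
    have hmul : P ^ (1 - α) * P ^ α = P := by
      rw [← Real.rpow_add hP0]; simp
    have hden : (0:ℝ) < 1 + P ^ α := by linarith
    constructor
    · have : P ^ (1 - α) / 2 ≤ P / (1 + P ^ α) := by
        rw [div_le_div_iff₀ two_pos hden]
        nlinarith
      linarith
    · have : P / (1 + P ^ α) ≤ P ^ (1 - α) := by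
        rw [div_le_iff₀ hden]; nlinarith
      linarith
  have hC : Tendsto (fun P : ℝ => logb 2 (1 + P ^ α + P / (1 + P ^ α)) / logb 2 P) atTop
      (nhds m) := by
    apply key m 3 (by norm_num)
    filter_upwards [hbase] with P hP
    have hP0 : (0:ℝ) < P := lt_of_lt_of_le one_pos hP
    have h1 : (1:ℝ) ≤ P ^ α := Real.one_le_rpow hP hα0
    have h2 : (1:ℝ) ≤ P ^ (1 - α) := Real.one_le_rpow hP (by linarith)
    have hmul : P ^ (1 - α) * P ^ α = P := by
      rw [← Real.rpow_add hP0]; simp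
    have hden : (0:ℝ) < 1 + P ^ α := by linarith
    have hm1 : (1:ℝ) ≤ P ^ m := Real.one_le_rpow hP (le_trans (by linarith) hmα')
    have hαm : P ^ α ≤ P ^ m := Real.rpow_le_rpow_of_exponent_le hP hmα
    have hαm' : P ^ (1 - α) ≤ P ^ m := Real.rpow_le_rpow_of_exponent_le hP hmα'
    have hfrac_le : P / (1 + P ^ α) ≤ P ^ (1 - α) := by
      rw [div_le_iff₀ hden]; nlinarith
    have hfrac_ge : P ^ (1 - α) / 2 ≤ P / (1 + P ^ α) := by
      rw [div_le_div_iff₀ two_pos hden]; nlinarith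
    have hfrac_pos : 0 < P / (1 + P ^ α) := by positivity
    constructor
    · rcases max_cases α (1 - α) with ⟨he, _⟩ | ⟨he, _⟩
      · rw [hm, he]; nlinarith
      · rw [hm, he]; nlinarith
    · nlinarith
  have hD : Tendsto (fun P : ℝ => logb 2 (1 + P + P ^ α) / logb 2 P) atTop (nhds 1) := by
    apply key 1 3 (by norm_num)
    filter_upwards [hbase] with P hP
    have hP0 : (0:ℝ) < P := lt_of_lt_of_le one_pos hP
    have h1 : (1:ℝ) ≤ P ^ α := Real.one_le_rpow hP hα0
    have hαP : P ^ α ≤ P := by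
      calc P ^ α ≤ P ^ (1:ℝ) := Real.rpow_le_rpow_of_exponent_le hP (by linarith)
        _ = P := Real.rpow_one P
    rw [Real.rpow_one]
    constructor <;> nlinarith
  have hmain : Tendsto (fun P : ℝ =>
      (1/2) * (min (logb 2 (1+P) / logb 2 P + logb 2 (1 + P/(1 + P ^ α)) / logb 2 P)
        (2 * (logb 2 (1 + P ^ α + P/(1 + P ^ α)) / logb 2 P))
        - logb 2 (1 + P + P ^ α) / logb 2 P)) atTop
      (nhds ((1/2) * (min (1 + (1 - α)) (2 * m) - 1))) :=
    (((hA.add hB).min (hC.const_mul 2)).sub hD).const_mul (1/2)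
  have hpt : (1/2) * (min (1 + (1 - α)) (2 * m) - 1) = min ((1-α)/2) |1/2 - α| := by
    rcases le_total α (1/2) with h | h
    · have hme : m = 1 - α := max_eq_right (by linarith)
      rw [hme, abs_of_nonneg (by linarith : (0:ℝ) ≤ 1/2 - α),
        min_eq_right (by linarith : 2 * (1 - α) ≤ 1 + (1 - α)),
        min_eq_right (by linarith : 1/2 - α ≤ (1 - α)/2)]
      ring
    · have hme : m = α := max_eq_left (by linarith)
      have habs : |1/2 - α| = α - 1/2 := by
        rw [abs_of_nonpos (by linarith : (1:ℝ)/2 - α ≤ 0)]; ring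
      rw [hme, habs]
      rcases le_total α (2/3) with h2 | h2
      · rw [min_eq_right (by linarith : 2 * α ≤ 1 + (1 - α)),
          min_eq_right (by linarith : α - 1/2 ≤ (1 - α)/2)]
        ring
      · rw [min_eq_left (by linarith : 1 + (1 - α) ≤ 2 * α),
          min_eq_left (by linarith : (1 - α)/2 ≤ α - 1/2)]
        ring
  rw [← hpt]
  apply hmain.congr'
  filter_upwards [eventually_gt_atTop (1:ℝ)] with P hP
  have hL0 : 0 < logb 2 P := Real.logb_pos one_lt_two hP
  rw [← add_div, mul_div_assoc' 2, min_div_div_right hL0.le, ← sub_div,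
    ← mul_div_assoc]
end
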